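/- For any real x with 0 < x ≤ 1/π, one has 1/sinc(x) ≤ 1 + 2x², where sinc(x) = sin(πx)/(πx). -/

import Mathlib

open Real

lemma sin_ge_sub_cube_div_six (t : ℝ) (ht : 0 ≤ t) : t - t ^ 3 / 6 ≤ Real.sin t := by
  have key : ∀ y : ℝ, HasDerivAt (fun y : ℝ => Real.sin y - (y - y ^ 3 / 6))
      (Real.cos y - (1 - y ^ 2 / 2)) y := by
    intro y
    have h1 : HasDerivAt Real.sin (Real.cos y) y := Real.hasDerivAt_sin y
    have h2 : HasDerivAt (fun y : ℝ => y - y ^ 3 / 6) (1 - y ^ 2 / 2) y := by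
      have := ((hasDerivAt_pow 3 y).div_const 6)
      have h := (hasDerivAt_id y).sub this
      refine h.congr_deriv ?_
      norm_num
      ring
    exact h1.sub h2
  have mono : MonotoneOn (fun y : ℝ => Real.sin y - (y - y ^ 3 / 6)) (Set.Ici 0) := by
    apply monotoneOn_of_deriv_nonneg (convex_Ici 0)
    · exact (Continuous.sub Real.continuous_sin (by continuity)).continuousOn
    · intro y _
      exact (key y).differentiableAt.differentiableWithinAt
    · intro y _
      rw [(key y).deriv]
      have := Real.one_sub_sq_div_two_le_cos (x := y)
      linarith
  have h0 : (fun y : ℝ => Real.sin y - (y - y ^ 3 / 6)) 0 ≤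
      (fun y : ℝ => Real.sin y - (y - y ^ 3 / 6)) t :=
    mono (Set.self_mem_Ici) (Set.mem_Ici.mpr ht) ht
  simp at h0
  linarith

theorem one_div_sinc_le (x : ℝ) (hx : 0 < x) (hx' : x ≤ 1 / π) :
    1 / (Real.sin (π * x) / (π * x)) ≤ 1 + 2 * x ^ 2 := by
  have hπ : 0 < π := Real.pi_pos
  set t := π * x with ht
  have ht0 : 0 < t := mul_pos hπ hx
  have ht1 : t ≤ 1 := by
    rw [ht]
    calc π * x ≤ π * (1 / π) := by nlinarith
    _ = 1 := by field_simp
  have hsin : 0 < Real.sin t := Real.sin_pos_of_pos_of_lt_pi ht0 (lt_of_le_of_lt ht1 (by nlinarith [Real.pi_gt_three]))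
  rw [one_div, inv_div]
  rw [div_le_iff₀ hsin]
  have hlow : t - t ^ 3 / 6 ≤ Real.sin t := sin_ge_sub_cube_div_six t ht0.le
  have hx2 : x ^ 2 = t ^ 2 / π ^ 2 := by rw [ht]; field_simp
  rw [hx2]
  have hπ2 : (9 : ℝ) < π ^ 2 := by nlinarith [Real.pi_gt_three]
  have hπ2' : π ^ 2 ≤ 10 := by nlinarith [Real.pi_lt_d2]

  -- goal: t ≤ (1 + 2 * (t^2/π^2)) * sin t
  have key : t ≤ (1 + 2 * (t ^ 2 / π ^ 2)) * (t - t ^ 3 / 6) := by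
    rw [← sub_nonneg]
    have h : (1 + 2 * (t ^ 2 / π ^ 2)) * (t - t ^ 3 / 6) - t
        = t ^ 3 / π ^ 2 * ((2 - π ^ 2 / 6) - t ^ 2 / 3) := by
      field_simp
      ring
    rw [h]
    apply mul_nonneg
    · positivity
    · nlinarith [sq_nonneg t, mul_le_one₀ ht1 ht0.le ht1]
  calc t ≤ (1 + 2 * (t ^ 2 / π ^ 2)) * (t - t ^ 3 / 6) := key
    _ ≤ (1 + 2 * (t ^ 2 / π ^ 2)) * Real.sin t := by
        apply mul_le_mul_of_nonneg_left hlow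
        positivity
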